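/- Let R > 0, a ∈ ℝ, let ψ̄ : ℝ² × ℝ → ℝ be twice continuously differentiable in the spatial variables, let ξ̄, ψ₁, …, ψ_m : ℝ² × ℝ → ℝ be continuously differentiable, let c₂, …, c_m ∈ ℝ be constants and set ν := ψ₁ − Σ_{n=2}^{m} c_n ψ_n. Suppose ∂_t ξ̄ + [ψ̄, ξ̄] = R⁻²[ψ̄, ν] and ∂_t ψ_k + [ψ̄, ψ_k] = 0 for k = 1, …, m hold everywhere, and let F : ℝ^m → ℝ be continuously differentiable. Then ∂_t(a ξ̄ + F(ψ₁, …, ψ_m)) + div((a(ξ̄ − R⁻² ν) + F(ψ₁, …, ψ_m)) ∇⊥ψ̄) = 0 at every point. -/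

import Mathlib

noncomputable section

/-- Partial derivative in the first spatial coordinate. -/
def pdx (f : ℝ × ℝ → ℝ) (p : ℝ × ℝ) : ℝ := fderiv ℝ f p ((1 : ℝ), (0 : ℝ))

/-- Partial derivative in the second spatial coordinate. -/
def pdy (f : ℝ × ℝ → ℝ) (p : ℝ × ℝ) : ℝ := fderiv ℝ f p ((0 : ℝ), (1 : ℝ))

/-- The Jacobian (canonical Poisson) bracket `[a,b] = a_x b_y - a_y b_x`. -/
def jb (a b : ℝ × ℝ → ℝ) (p : ℝ × ℝ) : ℝ := pdx a p * pdy b p - pdy a p * pdx b p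

/-- Perpendicular gradient `∇⊥ψ = (-ψ_y, ψ_x)`. -/
def pgrad (ψ : ℝ × ℝ → ℝ) (p : ℝ × ℝ) : ℝ × ℝ := (-(pdy ψ p), pdx ψ p)

/-- Gradient `∇ψ = (ψ_x, ψ_y)`. -/
def grad2 (ψ : ℝ × ℝ → ℝ) (p : ℝ × ℝ) : ℝ × ℝ := (pdx ψ p, pdy ψ p)

/-- Divergence of a planar vector field. -/
def div2 (v : ℝ × ℝ → ℝ × ℝ) (p : ℝ × ℝ) : ℝ :=
  pdx (fun q => (v q).1) p + pdy (fun q => (v q).2) p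

/-- Laplacian of a scalar field. -/
def lap2 (ψ : ℝ × ℝ → ℝ) (p : ℝ × ℝ) : ℝ := pdx (pdx ψ) p + pdy (pdy ψ) p

/-- Time derivative of a time-dependent field on ℝ² × ℝ. -/
def pdt (f : (ℝ × ℝ) × ℝ → ℝ) (z : (ℝ × ℝ) × ℝ) : ℝ :=
  fderiv ℝ f z ((0 : ℝ × ℝ), (1 : ℝ))

/-- Jacobian bracket of time-dependent fields, acting in the spatial variables at fixed time. -/
def jbt (a b : (ℝ × ℝ) × ℝ → ℝ) (z : (ℝ × ℝ) × ℝ) : ℝ :=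
  jb (fun q => a (q, z.2)) (fun q => b (q, z.2)) z.1

/-- Chain rule for a function of finitely many scalar fields. -/
lemma fderiv_compF {E : Type*} [NormedAddCommGroup E] [NormedSpace ℝ E]
    {m : ℕ} (F : (Fin m → ℝ) → ℝ) (hF : ContDiff ℝ 1 F)
    (g : Fin m → E → ℝ) {x : E} (hg : ∀ k, DifferentiableAt ℝ (g k) x) (v : E) :
    fderiv ℝ (fun y => F (fun k => g k y)) x v
      = fderiv ℝ F (fun k => g k x) (fun k => fderiv ℝ (g k) x v) := by
  have hu : DifferentiableAt ℝ (fun y k => g k y) x := differentiableAt_pi.2 hg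
  have hcomp : fderiv ℝ (fun y => F (fun k => g k y)) x
      = (fderiv ℝ F (fun k => g k x)).comp (fderiv ℝ (fun y k => g k y) x) :=
    fderiv_comp x ((hF.differentiable one_ne_zero) _) hu
  rw [hcomp]
  simp only [ContinuousLinearMap.comp_apply]
  congr 1
  rw [fderiv_pi hg]
  rfl

/-- Divergence of a flux along the perpendicular gradient is the Jacobian bracket. -/
lemma div2_smul_pgrad (Ψ G : ℝ × ℝ → ℝ) (p : ℝ × ℝ)
    (hΨ : ContDiff ℝ 2 Ψ) (hG : DifferentiableAt ℝ G p) :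
    div2 (fun q => G q • pgrad Ψ q) p = jb Ψ G p := by
  have hdΨ : Differentiable ℝ Ψ := hΨ.differentiable two_ne_zero
  have hΨ1 : ContDiff ℝ 1 (fderiv ℝ Ψ) := hΨ.fderiv_right (by norm_num)
  have hdΨ1 : Differentiable ℝ (fderiv ℝ Ψ) := hΨ1.differentiable one_ne_zero
  have hsym : ∀ v w : ℝ × ℝ, fderiv ℝ (fderiv ℝ Ψ) p v w = fderiv ℝ (fderiv ℝ Ψ) p w v :=
    second_derivative_symmetric (fun y => (hdΨ y).hasFDerivAt) (hdΨ1 p).hasFDerivAt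
  have key : ∀ v w : ℝ × ℝ,
      fderiv ℝ (fun q => fderiv ℝ Ψ q w) p v = fderiv ℝ (fderiv ℝ Ψ) p v w := by
    intro v w
    rw [fderiv_clm_apply (hdΨ1 p) (differentiableAt_const w)]
    simp
  have hdw : ∀ w : ℝ × ℝ, DifferentiableAt ℝ (fun q => fderiv ℝ Ψ q w) p :=
    fun w => (hdΨ1 p).clm_apply (differentiableAt_const w)
  have e1 : (fun q => ((G q • pgrad Ψ q : ℝ × ℝ)).1)
      = fun q => G q * (-(fderiv ℝ Ψ q ((0 : ℝ), (1 : ℝ)))) := by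
    funext q; simp [pgrad, pdy, smul_eq_mul]
  have e2 : (fun q => ((G q • pgrad Ψ q : ℝ × ℝ)).2)
      = fun q => G q * fderiv ℝ Ψ q ((1 : ℝ), (0 : ℝ)) := by
    funext q; simp [pgrad, pdx, smul_eq_mul]
  simp only [div2, pdx, pdy]
  rw [e1, e2, fderiv_fun_mul hG ((hdw ((0 : ℝ), (1 : ℝ))).fun_neg),
    fderiv_fun_mul hG (hdw ((1 : ℝ), (0 : ℝ)))]
  simp only [ContinuousLinearMap.add_apply, ContinuousLinearMap.smul_apply, smul_eq_mul,
    fderiv_fun_neg, ContinuousLinearMap.neg_apply]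
  rw [key ((1 : ℝ), (0 : ℝ)) ((0 : ℝ), (1 : ℝ)), key ((0 : ℝ), (1 : ℝ)) ((1 : ℝ), (0 : ℝ)),
    hsym ((1 : ℝ), (0 : ℝ)) ((0 : ℝ), (1 : ℝ))]
  simp only [jb, pdx, pdy]
  ring

/-- local (flux) form of the IL^(0,α)QG Casimirs
`∫ (a ξ̄ + F(ψ₁,…,ψ_m)) d²x` for α > 0. -/
theorem il0aqg_casimir_local_conservation_law (R : ℝ) (hR : 0 < R) (a : ℝ)
    (m : ℕ) (hm : 0 < m)
    (ψbar ξbar : (ℝ × ℝ) × ℝ → ℝ) (ψ : Fin m → (ℝ × ℝ) × ℝ → ℝ) (c : Fin m → ℝ)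
    (hψbar : ∀ t : ℝ, ContDiff ℝ 2 (fun q : ℝ × ℝ => ψbar (q, t)))
    (hξbar : ContDiff ℝ 1 ξbar) (hψ : ∀ k, ContDiff ℝ 1 (ψ k))
    (ν : (ℝ × ℝ) × ℝ → ℝ)
    (hν : ν = fun z => ψ ⟨0, hm⟩ z - ∑ k ∈ Finset.univ.erase (⟨0, hm⟩ : Fin m), c k * ψ k z)
    (heq1 : ∀ z : (ℝ × ℝ) × ℝ, pdt ξbar z + jbt ψbar ξbar z = (R ^ 2)⁻¹ * jbt ψbar ν z)
    (heq2 : ∀ k, ∀ z : (ℝ × ℝ) × ℝ, pdt (ψ k) z + jbt ψbar (ψ k) z = 0)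
    (F : (Fin m → ℝ) → ℝ) (hF : ContDiff ℝ 1 F)
    (z : (ℝ × ℝ) × ℝ) :
    pdt (fun w => a * ξbar w + F (fun k => ψ k w)) z
      + div2 (fun q =>
          (a * (ξbar (q, z.2) - (R ^ 2)⁻¹ * ν (q, z.2)) + F (fun k => ψ k (q, z.2))) •
          pgrad (fun q' => ψbar (q', z.2)) q) z.1 = 0 := by
  have hνC : ContDiff ℝ 1 ν := by
    rw [hν]
    exact (hψ _).sub (ContDiff.sum fun k _ => contDiff_const.mul (hψ k))
  have hemb : ContDiff ℝ 1 (fun q : ℝ × ℝ => (q, z.2)) := contDiff_id.prodMk contDiff_const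
  have hξs : Differentiable ℝ (fun q : ℝ × ℝ => ξbar (q, z.2)) :=
    (hξbar.comp hemb).differentiable one_ne_zero
  have hνs : Differentiable ℝ (fun q : ℝ × ℝ => ν (q, z.2)) :=
    (hνC.comp hemb).differentiable one_ne_zero
  have hσs : ∀ k, Differentiable ℝ (fun q : ℝ × ℝ => ψ k (q, z.2)) :=
    fun k => ((hψ k).comp hemb).differentiable one_ne_zero
  have hFs : Differentiable ℝ (fun q : ℝ × ℝ => F (fun k => ψ k (q, z.2))) :=
    (hF.differentiable one_ne_zero).comp (differentiable_pi.2 fun k => hσs k)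
  have hGd : DifferentiableAt ℝ
      (fun q => a * (ξbar (q, z.2) - (R ^ 2)⁻¹ * ν (q, z.2)) + F (fun k => ψ k (q, z.2))) z.1 :=
    (((hξs z.1).sub ((hνs z.1).const_mul _)).const_mul a).add (hFs z.1)
  rw [div2_smul_pgrad _ _ _ (hψbar z.2) hGd]
  have hψd : ∀ k, Differentiable ℝ (ψ k) := fun k => (hψ k).differentiable one_ne_zero
  have hdG : ∀ v : ℝ × ℝ,
      fderiv ℝ (fun q => a * (ξbar (q, z.2) - (R ^ 2)⁻¹ * ν (q, z.2))
          + F (fun k => ψ k (q, z.2))) z.1 v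
        = a * (fderiv ℝ (fun q : ℝ × ℝ => ξbar (q, z.2)) z.1 v
              - (R ^ 2)⁻¹ * fderiv ℝ (fun q : ℝ × ℝ => ν (q, z.2)) z.1 v)
          + fderiv ℝ F (fun k => ψ k z)
              (fun k => fderiv ℝ (fun q : ℝ × ℝ => ψ k (q, z.2)) z.1 v) := by
    intro v
    rw [fderiv_fun_add (((hξs z.1).fun_sub ((hνs z.1).const_mul _)).const_mul a) (hFs z.1)]
    simp only [ContinuousLinearMap.add_apply]
    rw [fderiv_const_mul ((hξs z.1).fun_sub ((hνs z.1).const_mul _)) a,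
      fderiv_fun_sub (hξs z.1) ((hνs z.1).const_mul _), fderiv_const_mul (hνs z.1),
      fderiv_compF F hF (fun k q => ψ k (q, z.2)) (fun k => (hσs k) z.1) v]
    simp only [ContinuousLinearMap.smul_apply, ContinuousLinearMap.sub_apply, smul_eq_mul]
  have hpdt : fderiv ℝ (fun w => a * ξbar w + F (fun k => ψ k w)) z ((0 : ℝ × ℝ), (1 : ℝ))
      = a * fderiv ℝ ξbar z ((0 : ℝ × ℝ), (1 : ℝ))
        + fderiv ℝ F (fun k => ψ k z)
            (fun k => fderiv ℝ (ψ k) z ((0 : ℝ × ℝ), (1 : ℝ))) := by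
    have hFw : Differentiable ℝ (fun w : (ℝ × ℝ) × ℝ => F (fun k => ψ k w)) :=
      (hF.differentiable one_ne_zero).comp (differentiable_pi.2 fun k => hψd k)
    rw [fderiv_fun_add ((hξbar.differentiable one_ne_zero z).const_mul a) (hFw z),
      fderiv_const_mul (hξbar.differentiable one_ne_zero z) a]
    simp only [ContinuousLinearMap.add_apply, ContinuousLinearMap.smul_apply, smul_eq_mul]
    rw [fderiv_compF F hF ψ (fun k => (hψd k) z)]
  have h1 := heq1 z
  have h2 := fun k => heq2 k z
  simp only [pdt, jbt, jb, pdx, pdy] at h1 h2 ⊢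
  rw [hpdt, hdG ((0 : ℝ), (1 : ℝ)), hdG ((1 : ℝ), (0 : ℝ))]
  have hP : (fun k => fderiv ℝ (ψ k) z ((0 : ℝ × ℝ), (1 : ℝ)))
      = fun k => -(fderiv ℝ (fun q : ℝ × ℝ => ψbar (q, z.2)) z.1 ((1 : ℝ), (0 : ℝ))
            * fderiv ℝ (fun q : ℝ × ℝ => ψ k (q, z.2)) z.1 ((0 : ℝ), (1 : ℝ))
          - fderiv ℝ (fun q : ℝ × ℝ => ψbar (q, z.2)) z.1 ((0 : ℝ), (1 : ℝ))
            * fderiv ℝ (fun q : ℝ × ℝ => ψ k (q, z.2)) z.1 ((1 : ℝ), (0 : ℝ))) :=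
    funext fun k => by have := h2 k; linarith
  rw [hP]
  have hPn : (fun k => -(fderiv ℝ (fun q : ℝ × ℝ => ψbar (q, z.2)) z.1 ((1 : ℝ), (0 : ℝ))
            * fderiv ℝ (fun q : ℝ × ℝ => ψ k (q, z.2)) z.1 ((0 : ℝ), (1 : ℝ))
          - fderiv ℝ (fun q : ℝ × ℝ => ψbar (q, z.2)) z.1 ((0 : ℝ), (1 : ℝ))
            * fderiv ℝ (fun q : ℝ × ℝ => ψ k (q, z.2)) z.1 ((1 : ℝ), (0 : ℝ))))
      = -(fderiv ℝ (fun q : ℝ × ℝ => ψbar (q, z.2)) z.1 ((1 : ℝ), (0 : ℝ))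
            • (fun k => fderiv ℝ (fun q : ℝ × ℝ => ψ k (q, z.2)) z.1 ((0 : ℝ), (1 : ℝ)))
          - fderiv ℝ (fun q : ℝ × ℝ => ψbar (q, z.2)) z.1 ((0 : ℝ), (1 : ℝ))
            • (fun k => fderiv ℝ (fun q : ℝ × ℝ => ψ k (q, z.2)) z.1 ((1 : ℝ), (0 : ℝ)))) := rfl
  rw [hPn, map_neg, map_sub, map_smul, map_smul]
  simp only [smul_eq_mul]
  linear_combination a * h1
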